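/- f(2,q) = 2q + 1: every word of length 2q+1 over an alphabet of size q contains a copy of Z_2 = aba (i.e., a subword of the form v ++ u ++ v with u, v nonempty), and there exists a word of length 2q over an alphabet of size q containing no such subword. -/

import Mathlib

/-- A word contains a copy of `Z₂ = aba` if it has an infix `v ++ u ++ v`
with `u, v` nonempty. -/
def ContainsZ2 {α : Type*} (w : List α) : Prop :=
  ∃ u v : List α, u ≠ [] ∧ v ≠ [] ∧ (v ++ u ++ v) <:+: w

lemma sublist_split {α : Type*} {a : α} {l w : List α} (h : List.Sublist (a :: l) w) :
    ∃ s t, w = s ++ a :: t ∧ List.Sublist l t := by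
  induction w with
  | nil => simp at h
  | cons b w ih =>
    rcases h with _ | h'
    · rename_i h'
      obtain ⟨s, t, rfl, hl⟩ := ih h'
      exact ⟨b :: s, t, rfl, hl⟩
    · exact ⟨[], w, rfl, by assumption⟩

lemma pigeonhole {q : ℕ} (w : List (Fin q)) (hw : w.length = 2 * q + 1) :
    ∃ a : Fin q, 3 ≤ w.count a := by
  by_contra hc
  push_neg at hc
  have h1 : ∑ a : Fin q, (w : Multiset (Fin q)).count a = w.length := by
    rw [Multiset.sum_count_eq_card (by simp)]; simp
  have h2 : ∑ a : Fin q, (w : Multiset (Fin q)).count a ≤ ∑ _a : Fin q, 2 := by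
    apply Finset.sum_le_sum
    intro a _
    have := Nat.lt_succ_iff.mp (hc a)
    simpa [Multiset.coe_count] using this
  simp [hw] at h1
  simp at h2
  omega

lemma mid_getElem? {α : Type*} (s t : List α) (a : α) :
    (s ++ a :: t)[s.length]? = some a := by
  rw [List.getElem?_append_right (Nat.le_refl _)]
  simp

theorem f_two_eq (q : ℕ) (hq : 1 ≤ q) :
    (∀ w : List (Fin q), w.length = 2 * q + 1 → ContainsZ2 w) ∧
    (∃ w : List (Fin q), w.length = 2 * q ∧ ¬ ContainsZ2 w) := by
  constructor
  · intro w hw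
    obtain ⟨a, ha⟩ := pigeonhole w hw
    have hs : List.Sublist [a, a, a] w := by
      have := (List.replicate_sublist_iff (n := 3) (a := a) (l := w)).mpr ha
      simpa [List.replicate] using this
    obtain ⟨s₁, t₁, rfl, h1⟩ := sublist_split hs
    obtain ⟨s₂, t₂, rfl, h2⟩ := sublist_split h1
    obtain ⟨s₃, t₃, rfl, _⟩ := sublist_split h2
    refine ⟨s₂ ++ a :: s₃, [a], by simp, by simp, ⟨s₁, t₃, ?_⟩⟩
    simp
  · set f : Fin (2 * q) → Fin q := fun k => ⟨k / 2, by omega⟩ with hf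
    refine ⟨List.ofFn f, by simp, ?_⟩
    rintro ⟨u, v, hu, hv, s, t, heq⟩
    obtain ⟨a, v', rfl⟩ := List.exists_cons_of_ne_nil hv
    obtain ⟨b, u', rfl⟩ := List.exists_cons_of_ne_nil hu
    have h1 : s ++ a :: (v' ++ (b :: u') ++ a :: (v' ++ t)) = List.ofFn f := by
      simpa [List.append_assoc] using heq
    have h2 : (s ++ a :: (v' ++ (b :: u'))) ++ a :: (v' ++ t) = List.ofFn f := by
      simpa [List.append_assoc] using heq
    have hl := congrArg List.length h1
    simp [List.length_append] at hl
    set i := s.length with hi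
    set j := s.length + (v'.length + (u'.length + 1)) + 1 with hj
    have hilt : i < 2 * q := by omega
    have hjlt : j < 2 * q := by omega
    have g1 : (List.ofFn f)[i]? = some a := by
      rw [← h1]; exact mid_getElem? _ _ a
    have g2 : (List.ofFn f)[j]? = some a := by
      rw [← h2]
      have := mid_getElem? (s ++ a :: (v' ++ (b :: u'))) (v' ++ t) a
      rwa [show (s ++ a :: (v' ++ (b :: u'))).length = j from by simp [hj]; omega] at this
    have e1 : (List.ofFn f)[i]? = some (f ⟨i, hilt⟩) := by
      simp [List.getElem?_ofFn, hilt]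
    have e2 : (List.ofFn f)[j]? = some (f ⟨j, hjlt⟩) := by
      simp [List.getElem?_ofFn, hjlt]
    rw [e1] at g1
    rw [e2] at g2
    have : f ⟨i, hilt⟩ = f ⟨j, hjlt⟩ := Option.some_injective _ (g1.trans g2.symm)
    have hval : i / 2 = j / 2 := congrArg Fin.val this
    omega
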